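/- Let δ = 2^{−k} and d ∈ ℕ, and let g: ℝ^d → ℝ^d be a two-layer δ-quantized ReLU network g(x) = M₂ σ(M₁ x) with M₁ ∈ ℝ^{w×d}, M₂ ∈ ℝ^{d×w}, whose weight entries are sampled from arbitrary distributions over S_δ. Suppose there is a constant p ∈ (0,1] such that, with probability at least p, every function h_W(x) = [I, −I] σ([W; −W]x) with W ∈ S_δ^{d×d} can be obtained by pruning g. Then the hidden width w of g satisfies w = Ω(d·log₂(1/δ)); i.e., there is a constant c > 0 (depending only on p) with w ≥ c·d·log₂(1/δ). -/
import Mathlib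


open MeasureTheory ProbabilityTheory
open scoped ENNReal

/-- The set `S_δ = {-1, -1+δ, -1+2δ, …, 1}` for `δ = 2^{-k}`. -/
noncomputable def Sq (k : ℕ) : Finset ℝ :=
  (Finset.range (2 ^ (k + 1) + 1)).image (fun j : ℕ => -1 + (j : ℝ) * (2 : ℝ) ^ (-(k : ℤ)))

/-- `h_W(x) = [I, -I]·σ([W; -W]·x)`, written coordinatewise:
`(h_W x) r = σ((Wx)_r) - σ((-Wx)_r)`. -/
noncomputable def hW (d : ℕ) (W : Fin d → Fin d → ℝ) (x : Fin d → ℝ) : Fin d → ℝ :=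
  fun r => max 0 (∑ c, W r c * x c) - max 0 (∑ c, -W r c * x c)

lemma Sq_card (k : ℕ) : (Sq k).card = 2 ^ (k + 1) + 1 := by
  rw [Sq, Finset.card_image_of_injective _ ?_, Finset.card_range]
  intro a b hab
  have hδ : (0:ℝ) < (2:ℝ) ^ (-(k:ℤ)) := by positivity
  have : (a : ℝ) = b := by
    have h := add_left_cancel hab
    exact mul_right_cancel₀ (ne_of_gt hδ) h
  exact_mod_cast this

lemma max_zero_sub (a : ℝ) : max 0 a - max 0 (-a) = a := by
  rcases le_total 0 a with h | h
  · rw [max_eq_right h, max_eq_left (by linarith)]; ring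
  · rw [max_eq_left h, max_eq_right (by linarith)]; ring

noncomputable def ind (d : ℕ) (c : Fin d) : Fin d → ℝ := fun i => if i = c then 1 else 0

lemma hW_eval (d : ℕ) (W : Fin d → Fin d → ℝ) (c r : Fin d) :
    hW d W (ind d c) r = W r c := by
  have hs : ∀ u : Fin d → ℝ, (∑ i, u i * ind d c i) = u c := by
    intro u
    rw [Finset.sum_eq_single c]
    · simp [ind]
    · intro b _ hb; simp [ind, hb]
    · simp
  have hneg : (∑ i, -W r i * ind d c i)
      = -(∑ i, W r i * ind d c i) := by
    rw [← Finset.sum_neg_distrib]; simp [neg_mul]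
  rw [hW, hneg, hs, max_zero_sub]

/-- width lower bound for two-layer quantized strong lottery tickets.
Let `g(x) = M₂σ(M₁x)` be a two-layer `δ`-quantized ReLU network (`δ = 2^{-k}`) of hidden
width `wd`, with weight entries sampled from arbitrary distributions over `S_δ`. If, with
probability at least `p`, *every* function `h_W` with `W ∈ S_δ^{d×d}` can be obtained by
pruning `g`, then `wd = Ω(d·log₂(1/δ))`: there is a constant `c > 0`, depending only on `p`,
with `wd ≥ c·d·log₂(1/δ)`. -/
theorem quantized_slth_width_lower_bound (p : ℝ) (hp0 : 0 < p) (hp1 : p ≤ 1) :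
    ∃ c : ℝ, 0 < c ∧
      ∀ (k d wd : ℕ)
        (Ω : Type) [MeasureSpace Ω] [IsProbabilityMeasure (ℙ : Measure Ω)]
        (M₁ : Fin wd → Fin d → Ω → ℝ) (M₂ : Fin d → Fin wd → Ω → ℝ),
        (∀ j i ω, M₁ j i ω ∈ Sq k) →
        (∀ r j ω, M₂ r j ω ∈ Sq k) →
        p ≤ (ℙ {ω | ∀ W : Fin d → Fin d → ℝ, (∀ r c, W r c ∈ Sq k) →
            ∃ (S₁ : Fin wd → Fin d → Bool) (S₂ : Fin d → Fin wd → Bool),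
              ∀ (x : Fin d → ℝ) (r : Fin d),
                (∑ j, (if S₂ r j then M₂ r j ω else 0) *
                    max 0 (∑ i, (if S₁ j i then M₁ j i ω else 0) * x i)) =
                  hW d W x r}).toReal →
        c * (d : ℝ) * (k : ℝ) ≤ (wd : ℝ) := by
  refine ⟨1/2, by norm_num, ?_⟩
  intro k d wd Ω _ _ M₁ M₂ hM1 hM2 hprob
  rcases Nat.eq_zero_or_pos d with rfl | hd
  · simp
  -- the event is nonempty
  obtain ⟨ω, hω⟩ : ({ω | ∀ W : Fin d → Fin d → ℝ, (∀ r c, W r c ∈ Sq k) →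
      ∃ (S₁ : Fin wd → Fin d → Bool) (S₂ : Fin d → Fin wd → Bool),
        ∀ (x : Fin d → ℝ) (r : Fin d),
          (∑ j, (if S₂ r j then M₂ r j ω else 0) *
              max 0 (∑ i, (if S₁ j i then M₁ j i ω else 0) * x i)) =
            hW d W x r} : Set Ω).Nonempty := by
    apply MeasureTheory.nonempty_of_measure_ne_zero (μ := (ℙ : Measure Ω))
    intro h0
    rw [h0] at hprob
    simp only [ENNReal.toReal_zero] at hprob
    linarith
  have key : ∀ V : Fin d → Fin d → {x // x ∈ Sq k},
      ∃ pr : (Fin wd → Fin d → Bool) × (Fin d → Fin wd → Bool),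
        ∀ (x : Fin d → ℝ) (r : Fin d),
          (∑ j, (if pr.2 r j then M₂ r j ω else 0) *
              max 0 (∑ i, (if pr.1 j i then M₁ j i ω else 0) * x i)) =
            hW d (fun r c => (V r c : ℝ)) x r := by
    intro V
    obtain ⟨S₁, S₂, h⟩ := hω (fun r c => (V r c : ℝ)) (fun r c => (V r c).2)
    exact ⟨(S₁, S₂), h⟩
  choose F hF using key
  have hinj : Function.Injective F := by
    intro V V' hVV
    funext r c
    have h1 := hF V (ind d c) r
    have h2 := hF V' (ind d c) r
    rw [hVV] at h1
    have h3 : hW d (fun r c => (V r c : ℝ)) (ind d c) r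
        = hW d (fun r c => (V' r c : ℝ)) (ind d c) r := h1.symm.trans h2
    rw [hW_eval, hW_eval] at h3
    exact Subtype.ext h3
  have hcard := Fintype.card_le_of_injective F hinj
  rw [Fintype.card_prod] at hcard
  simp only [Fintype.card_fun, Fintype.card_bool, Fintype.card_coe, Sq_card,
    Fintype.card_fin] at hcard
  -- hcard : ((2^(k+1)+1)^d)^d ≤ (2^d)^wd * (2^wd)^d
  have h2 : 2 ^ ((k+1) * (d*d)) ≤ 2 ^ (d*wd + wd*d) := by
    calc 2 ^ ((k+1)*(d*d)) = (2^(k+1))^(d*d) := by rw [pow_mul]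
      _ ≤ (2^(k+1)+1)^(d*d) := Nat.pow_le_pow_left (by omega) _
      _ = ((2^(k+1)+1)^d)^d := by rw [pow_mul]
      _ ≤ (2^d)^wd * (2^wd)^d := hcard
      _ = 2 ^ (d*wd + wd*d) := by rw [← pow_mul, ← pow_mul, ← pow_add]
  have h3 : (k+1) * (d*d) ≤ d*wd + wd*d :=
    (Nat.pow_le_pow_iff_right (by norm_num)).1 h2
  have h4 : (k+1) * d ≤ 2 * wd := by
    have h5 : ((k+1) * d) * d ≤ (2 * wd) * d := by
      calc ((k+1)*d)*d = (k+1)*(d*d) := by ring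
        _ ≤ d*wd + wd*d := h3
        _ = (2*wd)*d := by ring
    exact Nat.le_of_mul_le_mul_right h5 hd
  have h6 : (k * d : ℕ) ≤ 2 * wd := le_trans (by nlinarith) h4
  have h7 : (k : ℝ) * d ≤ 2 * wd := by exact_mod_cast h6
  linarith
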